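/- For a binary linear code C of length n and any i with 0 ≤ i ≤ n/2, the number of zero neighbors of weight 2i in the even weight subcode C_even equals L_{2i}(C) + N_{2i}(C). -/
import Mathlib


open Finset

/-- Support of a binary vector: the set of nonzero coordinates. -/
def supp {n : ℕ} (v : Fin n → ZMod 2) : Finset (Fin n) :=
  Finset.univ.filter fun i => v i ≠ 0

/-- Hamming weight. -/
def wt {n : ℕ} (v : Fin n → ZMod 2) : ℕ := (supp v).card

/-- A nonzero codeword of `D` is a zero neighbor (minimal codeword) if no nonzero
codeword of `D` has support strictly contained in its support. -/
def IsZeroNeighbor {n : ℕ} (D : Set (Fin n → ZMod 2)) (v : Fin n → ZMod 2) : Prop :=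
  v ∈ D ∧ v ≠ 0 ∧ ∀ v' ∈ D, v' ≠ 0 → ¬ supp v' ⊂ supp v

/-- `v` is decomposable in `D` if it is the sum of two nonzero codewords of `D`
with disjoint supports. -/
def Decomposable {n : ℕ} (D : Set (Fin n → ZMod 2)) (v : Fin n → ZMod 2) : Prop :=
  ∃ v1 v2, v1 ∈ D ∧ v2 ∈ D ∧ v1 ≠ 0 ∧ v2 ≠ 0 ∧
    Disjoint (supp v1) (supp v2) ∧ v = v1 + v2

/-- Extension of a vector by its overall parity bit. -/
def extVec {n : ℕ} (v : Fin n → ZMod 2) : Fin (n + 1) → ZMod 2 :=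
  Fin.snoc v (∑ i, v i)

/-- The extended code. -/
def extCode {n : ℕ} (C : Submodule (ZMod 2) (Fin n → ZMod 2)) :
    Set (Fin (n + 1) → ZMod 2) :=
  extVec '' (C : Set (Fin n → ZMod 2))

/-- An even-weight codeword is only-odd-decomposable if it is decomposable and in every
decomposition into nonzero disjoint-support codewords both parts have odd weight. -/
def OnlyOddDecomposable {n : ℕ} (C : Submodule (ZMod 2) (Fin n → ZMod 2))
    (v : Fin n → ZMod 2) : Prop :=
  Even (wt v) ∧ Decomposable (C : Set (Fin n → ZMod 2)) v ∧
    ∀ v1 v2, v1 ∈ C → v2 ∈ C → v1 ≠ 0 → v2 ≠ 0 →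
      Disjoint (supp v1) (supp v2) → v = v1 + v2 → Odd (wt v1) ∧ Odd (wt v2)

/-- `L_w(D)`: the number of zero neighbors of weight `w` in `D`. -/
noncomputable def Lw {n : ℕ} (D : Set (Fin n → ZMod 2)) (w : ℕ) : ℕ :=
  {v : Fin n → ZMod 2 | IsZeroNeighbor D v ∧ wt v = w}.ncard

/-- `N_w(C)`: the number of only-odd-decomposable codewords of weight `w` in `C`. -/
noncomputable def Nw {n : ℕ} (C : Submodule (ZMod 2) (Fin n → ZMod 2)) (w : ℕ) : ℕ :=
  {v : Fin n → ZMod 2 | v ∈ C ∧ OnlyOddDecomposable C v ∧ wt v = w}.ncard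

/-- Action of a coordinate permutation on a vector. -/
def permVec {n : ℕ} (π : Equiv.Perm (Fin n)) (v : Fin n → ZMod 2) : Fin n → ZMod 2 :=
  v ∘ π.symm

/-- `π` is an automorphism of the code `D`. -/
def IsAut {n : ℕ} (D : Set (Fin n → ZMod 2)) (π : Equiv.Perm (Fin n)) : Prop :=
  permVec π '' D = D

/-- The even weight subcode of `C`, as a set. -/
def evenSub {n : ℕ} (C : Submodule (ZMod 2) (Fin n → ZMod 2)) :
    Set (Fin n → ZMod 2) :=
  {v : Fin n → ZMod 2 | v ∈ C ∧ Even (wt v)}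

namespace LwAux

variable {n : ℕ}

lemma mem_supp {v : Fin n → ZMod 2} {j : Fin n} : j ∈ supp v ↔ v j ≠ 0 := by
  simp [supp]

lemma supp_eq_empty_iff {v : Fin n → ZMod 2} : supp v = ∅ ↔ v = 0 := by
  constructor
  · intro h
    funext j
    by_contra hj
    have : j ∈ supp v := mem_supp.mpr hj
    simp [h] at this
  · rintro rfl; simp [supp]

lemma ne_zero_iff_supp_nonempty {v : Fin n → ZMod 2} :
    v ≠ 0 ↔ (supp v).Nonempty := by
  rw [Finset.nonempty_iff_ne_empty, not_iff_not.symm, not_not, not_not,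
    supp_eq_empty_iff]

lemma supp_add_of_disjoint {v1 v2 : Fin n → ZMod 2}
    (h : Disjoint (supp v1) (supp v2)) : supp (v1 + v2) = supp v1 ∪ supp v2 := by
  ext j
  have h2 : ¬ (j ∈ supp v1 ∧ j ∈ supp v2) := fun ⟨a, b⟩ =>
    (Finset.disjoint_left.mp h a) b
  simp only [mem_supp, Finset.mem_union, Pi.add_apply] at *
  revert h2
  generalize v1 j = a; generalize v2 j = b
  revert a b; decide

lemma wt_add_of_disjoint {v1 v2 : Fin n → ZMod 2}
    (h : Disjoint (supp v1) (supp v2)) : wt (v1 + v2) = wt v1 + wt v2 := by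
  rw [wt, supp_add_of_disjoint h, Finset.card_union_of_disjoint h]; rfl

lemma supp_add_of_subset {v v' : Fin n → ZMod 2} (h : supp v' ⊆ supp v) :
    supp (v + v') = supp v \ supp v' := by
  ext j
  have h2 : j ∈ supp v' → j ∈ supp v := fun a => h a
  simp only [mem_supp, Finset.mem_sdiff, Pi.add_apply] at *
  revert h2
  generalize v j = a; generalize v' j = b
  revert a b; decide

lemma add_add_cancel (v w : Fin n → ZMod 2) : w + (v + w) = v := by
  funext j
  simp only [Pi.add_apply]
  generalize v j = a; generalize w j = b
  revert a b; decide

/-- A decomposition of `v` obtained from a nonzero codeword whose support is strictly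
contained in that of `v`. -/
lemma decomp_of_ssubset {C : Submodule (ZMod 2) (Fin n → ZMod 2)}
    {v v' : Fin n → ZMod 2} (hv : v ∈ C) (hv' : v' ∈ C)
    (hss : supp v' ⊂ supp v) :
    (v + v') ∈ C ∧ (v + v') ≠ 0 ∧ Disjoint (supp v') (supp (v + v')) ∧
      v = v' + (v + v') := by
  have hsub : supp v' ⊆ supp v := hss.subset
  have hsupp : supp (v + v') = supp v \ supp v' := supp_add_of_subset hsub
  refine ⟨C.add_mem hv hv', ?_, ?_, (add_add_cancel v v').symm⟩
  · rw [ne_zero_iff_supp_nonempty, hsupp]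
    obtain ⟨j, hjv, hjv'⟩ := Finset.exists_of_ssubset hss
    exact ⟨j, Finset.mem_sdiff.mpr ⟨hjv, hjv'⟩⟩
  · rw [hsupp]
    exact Finset.disjoint_sdiff

lemma ssubset_of_decomp {v v1 v2 : Fin n → ZMod 2} (h2 : v2 ≠ 0)
    (hd : Disjoint (supp v1) (supp v2)) (he : v = v1 + v2) :
    supp v1 ⊂ supp v := by
  have hsupp : supp v = supp v1 ∪ supp v2 := by
    rw [he, supp_add_of_disjoint hd]
  rw [hsupp]
  refine Finset.ssubset_iff_subset_ne.mpr ⟨Finset.subset_union_left, ?_⟩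
  intro hEq
  obtain ⟨j, hj⟩ := ne_zero_iff_supp_nonempty.mp h2
  have : j ∈ supp v1 := by
    rw [hEq]; exact Finset.mem_union_right _ hj
  exact Finset.disjoint_left.mp hd this hj

end LwAux

theorem lwd_evenSub_eq {n : ℕ}
    (C : Submodule (ZMod 2) (Fin n → ZMod 2)) (i : ℕ) (hi : i ≤ n / 2) :
    Lw (evenSub C) (2 * i) =
      Lw (C : Set (Fin n → ZMod 2)) (2 * i) + Nw C (2 * i) := by
  classical
  open LwAux in
  have key : {v : Fin n → ZMod 2 | IsZeroNeighbor (evenSub C) v ∧ wt v = 2 * i}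
      = {v : Fin n → ZMod 2 | IsZeroNeighbor (C : Set (Fin n → ZMod 2)) v ∧ wt v = 2 * i}
        ∪ {v : Fin n → ZMod 2 | v ∈ C ∧ OnlyOddDecomposable C v ∧ wt v = 2 * i} := by
    ext v
    simp only [Set.mem_setOf_eq, Set.mem_union]
    constructor
    · rintro ⟨⟨⟨hvC, hvE⟩, hv0, hmin⟩, hw⟩
      by_cases hz : IsZeroNeighbor (C : Set (Fin n → ZMod 2)) v
      · exact Or.inl ⟨hz, hw⟩
      · refine Or.inr ⟨hvC, ⟨hvE, ?_, ?_⟩, hw⟩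
        · -- decomposable
          simp only [IsZeroNeighbor, not_and, not_forall] at hz
          obtain ⟨v', hv'C, hv'0, hss'⟩ := hz hvC hv0
          have hss := not_not.mp hss'
          obtain ⟨hmem, hne, hdisj, heq⟩ :=
            LwAux.decomp_of_ssubset hvC hv'C hss
          exact ⟨v', v + v', hv'C, hmem, hv'0, hne, hdisj, heq⟩
        · -- every decomposition has odd parts
          intro v1 v2 h1C h2C h10 h20 hd he
          have hodd1 : ¬ Even (wt v1) := by
            intro hev1
            exact hmin v1 ⟨h1C, hev1⟩ h10 (LwAux.ssubset_of_decomp h20 hd he)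
          have hodd2 : ¬ Even (wt v2) := by
            intro hev2
            refine hmin v2 ⟨h2C, hev2⟩ h20 (LwAux.ssubset_of_decomp h10 hd.symm ?_)
            rw [he, add_comm]
          exact ⟨Nat.not_even_iff_odd.mp hodd1, Nat.not_even_iff_odd.mp hodd2⟩
    · rintro (⟨⟨hvC, hv0, hmin⟩, hw⟩ | ⟨hvC, ⟨hvE, hdec, hood⟩, hw⟩)
      · refine ⟨⟨⟨hvC, by rw [hw]; exact even_two_mul i⟩, hv0, ?_⟩, hw⟩
        exact fun v' hv' hne hss => hmin v' hv'.1 hne hss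
      · -- only-odd-decomposable codewords are zero neighbors of the even subcode
        obtain ⟨v1, v2, h1C, h2C, h10, h20, hd, he⟩ := hdec
        have hv0 : v ≠ 0 := by
          rw [LwAux.ne_zero_iff_supp_nonempty, he, LwAux.supp_add_of_disjoint hd]
          obtain ⟨j, hj⟩ := LwAux.ne_zero_iff_supp_nonempty.mp h10
          exact ⟨j, Finset.mem_union_left _ hj⟩
        refine ⟨⟨⟨hvC, hvE⟩, hv0, ?_⟩, hw⟩
        rintro v' ⟨hv'C, hv'E⟩ hv'0 hss
        obtain ⟨hmem, hne, hdisj, heq⟩ := LwAux.decomp_of_ssubset hvC hv'C hss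
        obtain ⟨hO, -⟩ := hood v' (v + v') hv'C hmem hv'0 hne hdisj heq
        exact (Nat.not_odd_iff_even.mpr hv'E) hO
  have hdisj : Disjoint
      {v : Fin n → ZMod 2 | IsZeroNeighbor (C : Set (Fin n → ZMod 2)) v ∧ wt v = 2 * i}
      {v : Fin n → ZMod 2 | v ∈ C ∧ OnlyOddDecomposable C v ∧ wt v = 2 * i} := by
    rw [Set.disjoint_left]
    rintro v ⟨⟨hvC, hv0, hmin⟩, -⟩ ⟨-, ⟨-, hdec, -⟩, -⟩
    obtain ⟨v1, v2, h1C, h2C, h10, h20, hd, he⟩ := hdec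
    exact hmin v1 h1C h10 (LwAux.ssubset_of_decomp h20 hd he)
  rw [Lw, Lw, Nw, key, Set.ncard_union_eq hdisj (Set.toFinite _) (Set.toFinite _)]
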